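/- For every natural number r there exists a constant d(r) such that every finite graph with minimum degree at least d(r) contains K_r as a topological minor (i.e., contains a subdivision of K_r as a subgraph). -/

import Mathlib

open SimpleGraph

def TopMinor {W V : Type*} (H : SimpleGraph W) (G : SimpleGraph V) : Prop :=
  ∃ (φ : W → V) (P : ∀ u v : W, H.Adj u v → G.Walk (φ u) (φ v)),
    Function.Injective φ ∧
    (∀ u v huv, (P u v huv).IsPath) ∧
    (∀ (u v : W) (huv : H.Adj u v), P v u huv.symm = (P u v huv).reverse) ∧
    (∀ (u v : W) (huv : H.Adj u v) (w : W), φ w ∈ (P u v huv).support → w = u ∨ w = v) ∧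
    (∀ (u v : W) (huv : H.Adj u v) (u' v' : W) (hu'v' : H.Adj u' v'),
      s(u, v) ≠ s(u', v') →
      ∀ x, x ∈ (P u v huv).support → x ∈ (P u' v' hu'v').support → x ∈ Set.range φ)

/-- A witness for topological-minor containment, with all data confined to `S`. -/
structure TMWit {W V : Type*} (H : SimpleGraph W) (G : SimpleGraph V) (S : Set V) where
  φ : W → V
  P : ∀ u v : W, H.Adj u v → G.Walk (φ u) (φ v)
  inj : Function.Injective φ
  ranS : ∀ w, φ w ∈ S
  isPath : ∀ u v h, (P u v h).IsPath
  psymm : ∀ u v h, P v u (H.adj_symm h) = (P u v h).reverse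
  supS : ∀ u v h, ∀ z ∈ (P u v h).support, z ∈ S
  cond4 : ∀ u v h w, φ w ∈ (P u v h).support → w = u ∨ w = v
  cond6 : ∀ u v (h : H.Adj u v) u' v' (h' : H.Adj u' v'), s(u,v) ≠ s(u',v') →
    ∀ z, z ∈ (P u v h).support → z ∈ (P u' v' h').support → z ∈ Set.range φ

theorem TMWit.toTopMinor {W V : Type*} {H : SimpleGraph W} {G : SimpleGraph V} {S : Set V}
    (w : TMWit H G S) : TopMinor H G :=
  ⟨w.φ, w.P, w.inj, w.isPath, fun u v h => w.psymm u v h, w.cond4, w.cond6⟩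

def TMWit.mono {W V : Type*} {H : SimpleGraph W} {G : SimpleGraph V} {S T : Set V}
    (hST : S ⊆ T) (w : TMWit H G S) : TMWit H G T :=
  { w with ranS := fun x => hST (w.ranS x), supS := fun u v h z hz => hST (w.supS u v h z hz) }

/-- Lift a witness inside an induced subgraph to the ambient graph. -/
noncomputable def TMWit.lift {W V : Type*} {H : SimpleGraph W} {G : SimpleGraph V} {S : Set V}
    (w : TMWit H (G.induce S) Set.univ) : TMWit H G S := by
  classical
  let ι : G.induce S ↪g G := SimpleGraph.Embedding.induce S
  have hι : Function.Injective ι := ι.injective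
  have hval : ∀ a : S, ι a = (a : V) := fun a => rfl
  refine
    { φ := fun x => (w.φ x : V)
      P := fun u v h => (w.P u v h).map ι.toHom
      inj := fun a b hab => w.inj (Subtype.val_injective hab)
      ranS := fun x => (w.φ x).2
      isPath := fun u v h => SimpleGraph.Walk.map_isPath_of_injective hι (w.isPath u v h)
      psymm := fun u v h => by
        show (w.P v u (H.adj_symm h)).map ι.toHom = ((w.P u v h).map ι.toHom).reverse
        rw [w.psymm u v h, SimpleGraph.Walk.reverse_map]
      supS := fun u v h z hz => ?_
      cond4 := fun u v h x hx => ?_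
      cond6 := fun u v h u' v' h' hne z hz hz' => ?_ }
  · have hz : z ∈ ((w.P u v h).support.map ι.toHom) := by
      rw [← SimpleGraph.Walk.support_map]; exact hz
    obtain ⟨a, _, rfl⟩ := List.mem_map.mp hz
    exact a.2
  · have hx : (w.φ x : V) ∈ ((w.P u v h).support.map ι.toHom) := by
      rw [← SimpleGraph.Walk.support_map]; exact hx
    obtain ⟨a, ha, hax⟩ := List.mem_map.mp hx
    have : a = w.φ x := Subtype.val_injective hax
    exact w.cond4 u v h x (this ▸ ha)
  · have hz : z ∈ ((w.P u v h).support.map ι.toHom) := by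
      rw [← SimpleGraph.Walk.support_map]; exact hz
    have hz' : z ∈ ((w.P u' v' h').support.map ι.toHom) := by
      rw [← SimpleGraph.Walk.support_map]; exact hz'
    obtain ⟨a, ha, rfl⟩ := List.mem_map.mp hz
    obtain ⟨a', ha', haa⟩ := List.mem_map.mp hz'
    have : a' = a := Subtype.val_injective haa
    subst this
    obtain ⟨x, hx⟩ := w.cond6 u v h u' v' h' hne a' ha ha'
    exact ⟨x, congrArg Subtype.val hx⟩

/-- An edgeless pattern graph embeds as soon as there are enough vertices. -/
theorem TMWit.ofEdgeless {W V : Type*} [Fintype W] [Fintype V] {H : SimpleGraph W}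
    {G : SimpleGraph V} (hne : ∀ u v : W, ¬H.Adj u v)
    (hcard : Fintype.card W ≤ Fintype.card V) : Nonempty (TMWit H G Set.univ) := by
  obtain ⟨f⟩ := Function.Embedding.nonempty_of_card_le hcard
  exact ⟨{ φ := f
           P := fun u v h => absurd h (hne u v)
           inj := f.injective
           ranS := fun _ => trivial
           isPath := fun u v h => absurd h (hne u v)
           psymm := fun u v h => absurd h (hne u v)
           supS := fun u v h => absurd h (hne u v)
           cond4 := fun u v h => absurd h (hne u v)
           cond6 := fun u v h => absurd h (hne u v) }⟩
section Counting
open Finset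
open scoped Classical

variable {V : Type} [Fintype V] (G : SimpleGraph V)

/-- External neighborhood of `U`. -/
noncomputable def NUf (U : Finset V) : Finset V :=
  Finset.univ.filter (fun w => w ∉ U ∧ ∃ u ∈ U, G.Adj u w)

lemma mem_NUf {U : Finset V} {w : V} :
    w ∈ NUf G U ↔ w ∉ U ∧ ∃ u ∈ U, G.Adj u w := by
  simp [NUf]

/-- Edges avoiding `U`. -/
noncomputable def eOut (U : Finset V) : ℕ :=
  (G.edgeFinset.filter (fun e => ∀ x ∈ e, x ∉ U)).card

noncomputable def fD (U : Finset V) : ℕ := eOut G U + (NUf G U).card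

lemma fD_singleton (v₀ : V) : fD G {v₀} = G.edgeFinset.card := by
  have h1 : NUf G {v₀} = G.neighborFinset v₀ := by
    ext w
    simp only [mem_NUf, SimpleGraph.mem_neighborFinset, Finset.mem_singleton]
    constructor
    · rintro ⟨hw, u, rfl, hadj⟩; exact hadj
    · intro h; exact ⟨fun hw => G.ne_of_adj h (hw ▸ rfl), v₀, rfl, h⟩
  have hcongr : G.edgeFinset.filter (fun e => ¬ ∀ x ∈ e, x ∉ ({v₀} : Finset V))
      = G.edgeFinset.filter (fun e => v₀ ∈ e) := by
    apply Finset.filter_congr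
    intro e _
    constructor
    · intro h
      push_neg at h
      obtain ⟨x, hxe, hx⟩ := h
      rw [Finset.mem_singleton] at hx
      exact hx ▸ hxe
    · intro h hc
      exact (hc v₀ h) (Finset.mem_singleton_self v₀)
  have h2 : G.edgeFinset.filter (fun e => v₀ ∈ e) = G.incidenceFinset v₀ := by
    ext e
    rw [Finset.mem_filter, SimpleGraph.mem_incidenceFinset]
    simp [SimpleGraph.incidenceSet]
  have h3 := Finset.card_filter_add_card_filter_not
    (s := G.edgeFinset) (p := fun e => ∀ x ∈ e, x ∉ ({v₀} : Finset V))
  rw [hcongr, h2, SimpleGraph.card_incidenceFinset_eq_degree] at h3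
  unfold fD eOut
  rw [h1, SimpleGraph.card_neighborFinset_eq_degree]
  omega

lemma fD_univ : fD G Finset.univ = 0 := by
  have h1 : NUf G Finset.univ = ∅ := by
    ext w; simp [mem_NUf]
  have h2 : eOut G Finset.univ = 0 := by
    unfold eOut
    rw [Finset.card_eq_zero, Finset.filter_eq_empty_iff]
    intro e _
    refine Sym2.ind (fun a b => ?_) e
    intro h
    exact h a (Sym2.mem_mk_left a b) (Finset.mem_univ a)
  unfold fD
  rw [h1, h2]
  simp

/-- The key inequality when inserting an external neighbor. -/
lemma fD_insert {U : Finset V} {v : V} (hv : v ∈ NUf G U) :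
    fD G U ≤ fD G (insert v U) + 1 + ((NUf G U).filter (fun w => G.Adj v w)).card := by
  set U' := insert v U with hU'
  set dNU := ((NUf G U).filter (fun w => G.Adj v w)).card with hdNU
  set newF := Finset.univ.filter (fun w => w ∉ U' ∧ w ∉ NUf G U ∧ G.Adj v w) with hnewF
  set dOutF := Finset.univ.filter (fun w => w ∉ U' ∧ G.Adj v w) with hdOutF
  obtain ⟨hvU, u₀, hu₀U, hu₀adj⟩ := (mem_NUf G).mp hv
  -- (a) eOut U ≤ eOut U' + dOutF.card
  have ha : eOut G U ≤ eOut G U' + dOutF.card := by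
    have hsplit : eOut G U =
        ((G.edgeFinset.filter (fun e => ∀ x ∈ e, x ∉ U)).filter (fun e => v ∉ e)).card +
        ((G.edgeFinset.filter (fun e => ∀ x ∈ e, x ∉ U)).filter (fun e => v ∈ e)).card := by
      unfold eOut
      rw [add_comm]
      exact (Finset.card_filter_add_card_filter_not _).symm
    have hsub : (G.edgeFinset.filter (fun e => ∀ x ∈ e, x ∉ U)).filter (fun e => v ∉ e)
        ⊆ G.edgeFinset.filter (fun e => ∀ x ∈ e, x ∉ U') := by
      intro e he
      simp only [Finset.mem_filter] at he ⊢
      obtain ⟨⟨he1, he2⟩, he3⟩ := he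
      refine ⟨he1, fun x hx => ?_⟩
      rw [hU', Finset.mem_insert]
      push_neg
      exact ⟨fun hxv => he3 (hxv ▸ hx), he2 x hx⟩
    have hin : ((G.edgeFinset.filter (fun e => ∀ x ∈ e, x ∉ U)).filter (fun e => v ∈ e)).card
        ≤ dOutF.card := by
      apply Finset.card_le_card_of_injOn
        (fun e => if h : v ∈ e then Sym2.Mem.other' h else v)
      · intro e he
        simp only [Finset.mem_coe, Finset.mem_filter] at he
        obtain ⟨⟨he1, he2⟩, he3⟩ := he
        simp only [Finset.mem_coe, dif_pos he3]
        have hspec := Sym2.other_spec' he3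
        have hadj : G.Adj v (Sym2.Mem.other' he3) := by
          rw [← SimpleGraph.mem_edgeSet, hspec]
          exact SimpleGraph.mem_edgeFinset.mp he1
        rw [hdOutF, Finset.mem_filter]
        refine ⟨Finset.mem_univ _, ?_, hadj⟩
        rw [hU', Finset.mem_insert]
        push_neg
        exact ⟨(G.ne_of_adj hadj).symm, he2 _ (Sym2.other_mem' he3)⟩
      · intro e₁ h₁ e₂ h₂ heq
        simp only [Finset.coe_filter, Set.mem_setOf_eq] at h₁ h₂
        dsimp only at heq
        rw [dif_pos h₁.2, dif_pos h₂.2] at heq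
        rw [← Sym2.other_spec' h₁.2, ← Sym2.other_spec' h₂.2, heq]
    have hle : ((G.edgeFinset.filter (fun e => ∀ x ∈ e, x ∉ U)).filter (fun e => v ∉ e)).card
        ≤ eOut G U' := Finset.card_le_card hsub
    omega
  -- (b) NUf U card + newF.card ≤ NUf U' card + 1
  have hb : (NUf G U).card + newF.card ≤ (NUf G U').card + 1 := by
    have hsub : ((NUf G U).erase v) ∪ newF ⊆ NUf G U' := by
      intro w hw
      rw [Finset.mem_union] at hw
      rcases hw with hw | hw
      · rw [Finset.mem_erase] at hw
        obtain ⟨hwv, hw⟩ := hw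
        rw [mem_NUf] at hw ⊢
        obtain ⟨hwU, u, huU, huadj⟩ := hw
        refine ⟨?_, u, Finset.mem_insert_of_mem huU, huadj⟩
        rw [hU', Finset.mem_insert]; push_neg; exact ⟨hwv, hwU⟩
      · rw [hnewF, Finset.mem_filter] at hw
        obtain ⟨-, hw1, hw2, hw3⟩ := hw
        rw [mem_NUf]
        exact ⟨hw1, v, Finset.mem_insert_self v U, hw3⟩
    have hdisj : Disjoint ((NUf G U).erase v) newF := by
      rw [Finset.disjoint_left]
      intro w hw hw'
      rw [hnewF, Finset.mem_filter] at hw'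
      exact hw'.2.2.1 (Finset.mem_of_mem_erase hw)
    have := Finset.card_le_card hsub
    rw [Finset.card_union_of_disjoint hdisj, Finset.card_erase_of_mem hv] at this
    have hvcard : 1 ≤ (NUf G U).card := Finset.card_pos.mpr ⟨v, hv⟩
    omega
  -- (c) dOutF.card ≤ dNU + newF.card
  have hc : dOutF.card ≤ dNU + newF.card := by
    have hsub : dOutF ⊆ ((NUf G U).filter (fun w => G.Adj v w)) ∪ newF := by
      intro w hw
      rw [hdOutF, Finset.mem_filter] at hw
      obtain ⟨-, hw1, hw2⟩ := hw
      rw [Finset.mem_union]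
      by_cases hwn : w ∈ NUf G U
      · exact Or.inl (Finset.mem_filter.mpr ⟨hwn, hw2⟩)
      · exact Or.inr (by rw [hnewF, Finset.mem_filter]; exact ⟨Finset.mem_univ _, hw1, hwn, hw2⟩)
    calc dOutF.card ≤ _ := Finset.card_le_card hsub
      _ ≤ dNU + newF.card := Finset.card_union_le _ _
  unfold fD
  omega

/-- Any walk from inside `U` to outside crosses an edge of the boundary. -/
lemma exists_crossing {U : Finset V} :
    ∀ {a b : V}, G.Walk a b → a ∈ U → b ∉ U → ∃ u ∈ U, ∃ w, w ∉ U ∧ G.Adj u w := by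
  intro a b w
  induction w with
  | nil => exact fun ha hb => absurd ha hb
  | @cons a c b h p ih =>
    intro ha hb
    by_cases hc : c ∈ U
    · exact ih hc hb
    · exact ⟨a, ha, c, hc, h⟩

def ConnIn (U : Finset V) : Prop :=
  ∀ a ∈ U, ∀ b ∈ U, ∃ w : G.Walk a b, ∀ x ∈ w.support, x ∈ U

lemma connIn_insert {U : Finset V} (hU : ConnIn G U) {v u : V} (hu : u ∈ U)
    (hadj : G.Adj u v) : ConnIn G (insert v U) := by
  have key : ∀ b ∈ U, ∃ w : G.Walk v b, ∀ x ∈ w.support, x ∈ insert v U := by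
    intro b hb
    obtain ⟨w, hw⟩ := hU u hu b hb
    refine ⟨SimpleGraph.Walk.cons hadj.symm w, ?_⟩
    intro x hx
    rw [SimpleGraph.Walk.support_cons, List.mem_cons] at hx
    rcases hx with rfl | hx
    · exact Finset.mem_insert_self _ _
    · exact Finset.mem_insert_of_mem (hw x hx)
  intro a ha b hb
  rw [Finset.mem_insert] at ha hb
  rcases ha with rfl | ha
  · rcases hb with rfl | hb
    · exact ⟨SimpleGraph.Walk.nil, by simp⟩
    · exact key b hb
  · rcases hb with rfl | hb
    · obtain ⟨w, hw⟩ := key a ha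
      exact ⟨w.reverse, fun x hx => hw x (by rwa [SimpleGraph.Walk.support_reverse,
        List.mem_reverse] at hx)⟩
    · obtain ⟨w, hw⟩ := hU a ha b hb
      exact ⟨w, fun x hx => Finset.mem_insert_of_mem (hw x hx)⟩

end Counting
section Main
open Finset
open scoped Classical

lemma ncard_nbr_eq_degree {V : Type} [Fintype V] (G : SimpleGraph V) (v : V) :
    (G.neighborSet v).ncard = G.degree v := by
  have h : ((G.neighborFinset v : Finset V) : Set V) = G.neighborSet v := by
    rw [SimpleGraph.neighborFinset_def]; exact Set.coe_toFinset _
  rw [← SimpleGraph.card_neighborFinset_eq_degree, ← Set.ncard_coe_finset, h]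

lemma ncard_induce_nbr {V : Type} [Fintype V] (G : SimpleGraph V) (S : Set V) (v : ↥S) :
    ((G.induce S).neighborSet v).ncard = {w : V | w ∈ S ∧ G.Adj ↑v w}.ncard := by
  rw [← Set.ncard_image_of_injective _ (Subtype.val_injective
    (p := fun x => x ∈ S))]
  congr 1
  ext w
  simp only [Set.mem_image, SimpleGraph.mem_neighborSet, Set.mem_setOf_eq]
  constructor
  · rintro ⟨a, ha, rfl⟩
    exact ⟨a.2, ha⟩
  · rintro ⟨hw, hadj⟩
    exact ⟨⟨w, hw⟩, hadj, rfl⟩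

lemma wit_of_edgeSet_empty {r : ℕ} {V : Type} [Fintype V] (G : SimpleGraph V)
    (X : SimpleGraph (Fin r)) (hE : X.edgeSet = ∅) (hcard : r ≤ Fintype.card V) :
    Nonempty (TMWit X G Set.univ) := by
  have hne : ∀ u v, ¬X.Adj u v := by
    intro u v h
    have := X.mem_edgeSet.mpr h
    rw [hE] at this
    exact this
  exact TMWit.ofEdgeless hne (by simpa using hcard)

lemma card_ge_of_mindeg {V : Type} [Fintype V] [Nonempty V] (G : SimpleGraph V) {d : ℕ}
    (hdeg : ∀ v : V, d ≤ (G.neighborSet v).ncard) : d ≤ Fintype.card V := by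
  obtain ⟨v⟩ := ‹Nonempty V›
  calc d ≤ (G.neighborSet v).ncard := hdeg v
    _ ≤ (Set.univ : Set V).ncard := Set.ncard_le_ncard (Set.subset_univ _) (Set.toFinite _)
    _ = Fintype.card V := by rw [Set.ncard_univ, Nat.card_eq_fintype_card]

theorem mainL (r : ℕ) : ∀ (m n : ℕ) (V : Type) [Fintype V] [Nonempty V] (G : SimpleGraph V),
    Fintype.card V ≤ n →
    (∀ v : V, (r + 2) * 2 ^ m ≤ (G.neighborSet v).ncard) →
    ∀ X : SimpleGraph (Fin r), X.edgeSet.ncard ≤ m →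
    Nonempty (TMWit X G (Set.univ : Set V)) := by
  intro m
  induction m with
  | zero =>
    intro n V _ _ G hn hdeg X hX
    have hE : X.edgeSet = ∅ := by
      have hfin : X.edgeSet.Finite := Set.toFinite _
      rw [← Set.ncard_eq_zero hfin]
      omega
    have hr : r ≤ Fintype.card V := by
      have := card_ge_of_mindeg G hdeg
      omega
    exact wit_of_edgeSet_empty G X hE hr
  | succ m ih =>
    intro n
    induction n with
    | zero =>
      intro V _ _ G hn hdeg X hX
      have := Fintype.card_pos (α := V)
      omega
    | succ n ihn =>
      intro V _ _ G hn hdeg X hX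
      by_cases hconn : G.Preconnected
      · -- main case
        have hn0pos : 1 ≤ Fintype.card V := Fintype.card_pos
        set n0 := Fintype.card V with hn0
        set c := (r + 2) * 2 ^ m with hcdef
        have hc1 : 1 ≤ c := by
          have : 1 ≤ 2 ^ m := Nat.one_le_two_pow
          calc 1 ≤ (r + 2) * 1 := by omega
            _ ≤ (r + 2) * 2 ^ m := Nat.mul_le_mul_left _ this
        have hdeg2 : ∀ v : V, 2 * c ≤ G.degree v := by
          intro v
          have h1 := hdeg v
          rw [ncard_nbr_eq_degree] at h1
          have h2 : (r + 2) * 2 ^ (m + 1) = 2 * c := by rw [hcdef]; ring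
          omega
        have hrcard : r ≤ n0 := by
          have h1 : 1 ≤ 2 ^ (m+1) := Nat.one_le_two_pow
          have h2 : r ≤ (r + 2) * 2 ^ (m+1) := by
            calc r ≤ (r + 2) * 1 := by omega
              _ ≤ (r + 2) * 2 ^ (m+1) := Nat.mul_le_mul_left _ h1
          have := card_ge_of_mindeg G hdeg
          omega
        by_cases hEX : X.edgeSet = ∅
        · exact wit_of_edgeSet_empty G X hEX hrcard
        · obtain ⟨e, he⟩ := Set.nonempty_iff_ne_empty.mpr hEX
          revert he
          refine Sym2.ind (fun x y he => ?_) e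
          have hxy : X.Adj x y := X.mem_edgeSet.mp he
          set Good : Finset V → Prop := fun U =>
            U.Nonempty ∧ ConnIn G U ∧ c * (n0 - U.card + 1) ≤ fD G U with hGooddef
          obtain ⟨v₀⟩ := ‹Nonempty V›
          have hGood0 : Good {v₀} := by
            refine ⟨Finset.singleton_nonempty v₀, ?_, ?_⟩
            · intro a ha b hb
              rw [Finset.mem_singleton] at ha hb
              subst ha; subst hb
              exact ⟨SimpleGraph.Walk.nil, by simp⟩
            · rw [fD_singleton]
              have hsum : n0 * (2 * c) ≤ ∑ v : V, G.degree v := by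
                calc n0 * (2 * c) = Finset.univ.card • (2 * c) := by
                      rw [Finset.card_univ, smul_eq_mul]
                  _ ≤ ∑ v : V, G.degree v :=
                      Finset.card_nsmul_le_sum _ _ _ (fun v _ => hdeg2 v)
              rw [SimpleGraph.sum_degrees_eq_twice_card_edges] at hsum
              have h3 : n0 * (2 * c) = 2 * (c * n0) := by ring
              have h4 : Finset.card {v₀} = 1 := Finset.card_singleton v₀
              rw [h4]
              have h5 : n0 - 1 + 1 = n0 := by omega
              rw [h5]
              omega
          obtain ⟨U, hU1, hUmax⟩ := Finset.exists_max_image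
            (Finset.univ.filter (fun U : Finset V => Good U)) Finset.card
            ⟨{v₀}, Finset.mem_filter.mpr ⟨Finset.mem_univ _, hGood0⟩⟩
          obtain ⟨hUne, hUconn, hUfd⟩ := (Finset.mem_filter.mp hU1).2
          have hUneq : U ≠ Finset.univ := by
            intro h
            rw [h, fD_univ, Finset.card_univ] at hUfd
            have h6 : n0 - n0 + 1 = 1 := by omega
            rw [h6, mul_one] at hUfd
            omega
          obtain ⟨b, hb⟩ : ∃ b, b ∉ U := by
            by_contra h
            push_neg at h
            exact hUneq (Finset.eq_univ_iff_forall.mpr h)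
          obtain ⟨a₀, ha₀⟩ := hUne
          have hSne : (NUf G U).Nonempty := by
            obtain ⟨p⟩ := hconn a₀ b
            obtain ⟨u, hu, w, hw, hadj⟩ := exists_crossing G p ha₀ hb
            exact ⟨w, (mem_NUf G).mpr ⟨hw, u, hu, hadj⟩⟩
          have hkey : ∀ v ∈ NUf G U,
              c ≤ ((NUf G U).filter (fun w => G.Adj v w)).card := by
            intro v hv
            obtain ⟨hvU, u, huU, hadj⟩ := (mem_NUf G).mp hv
            have hnotGood : ¬Good (insert v U) := by
              intro hg
              have h1 := hUmax _ (Finset.mem_filter.mpr ⟨Finset.mem_univ _, hg⟩)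
              rw [Finset.card_insert_of_notMem hvU] at h1
              omega
            have hconn' : ConnIn G (insert v U) := connIn_insert G hUconn huU hadj
            have hfail : ¬ c * (n0 - (insert v U).card + 1) ≤ fD G (insert v U) := by
              intro hle
              exact hnotGood ⟨⟨v, Finset.mem_insert_self _ _⟩, hconn', hle⟩
            push_neg at hfail
            rw [Finset.card_insert_of_notMem hvU] at hfail
            have hins := fD_insert G hv
            have hcard1 : U.card + 1 ≤ n0 := by
              have h7 := Finset.card_le_univ (insert v U)
              rw [Finset.card_insert_of_notMem hvU] at h7
              omega
            have e1 : n0 - (U.card + 1) + 1 = n0 - U.card := by omega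
            rw [e1] at hfail
            have e2 : c * (n0 - U.card + 1) = c * (n0 - U.card) + c := by ring
            rw [e2] at hUfd
            omega
          set Sset : Set V := ↑(NUf G U) with hSsetdef
          haveI hSsetne : Nonempty ↥Sset :=
            ⟨⟨hSne.choose, Finset.mem_coe.mpr hSne.choose_spec⟩⟩
          have hdegH : ∀ v' : ↥Sset,
              (r + 2) * 2 ^ m ≤ ((G.induce Sset).neighborSet v').ncard := by
            intro v'
            rw [ncard_induce_nbr]
            have heq : {w : V | w ∈ Sset ∧ G.Adj ↑v' w}
                = ↑((NUf G U).filter (fun w => G.Adj ↑v' w)) := by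
              ext z
              simp only [Set.mem_setOf_eq, Finset.coe_filter, hSsetdef, Finset.mem_coe]
            rw [heq, Set.ncard_coe_finset]
            exact hkey ↑v' (Finset.mem_coe.mp v'.2)
          set X' := X.deleteEdges {s(x, y)} with hX'def
          have hX'card : X'.edgeSet.ncard ≤ m := by
            rw [hX'def, SimpleGraph.edgeSet_deleteEdges]
            have h8 : (X.edgeSet \ {s(x, y)}).ncard = X.edgeSet.ncard - 1 :=
              Set.ncard_diff_singleton_of_mem he
            omega
          obtain ⟨wit0⟩ := ih (Fintype.card ↥Sset) ↥Sset (G.induce Sset) le_rfl hdegH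
            X' hX'card
          have wit : TMWit X' G Sset := wit0.lift
          set φ := wit.φ with hφdef
          have hφx : φ x ∈ Sset := wit.ranS x
          have hφy : φ y ∈ Sset := wit.ranS y
          have hSU : ∀ z : V, z ∈ Sset → z ∉ U := fun z hz =>
            ((mem_NUf G).mp (Finset.mem_coe.mp hz)).1
          obtain ⟨hx1, u1, hu1U, hu1adj⟩ := (mem_NUf G).mp (Finset.mem_coe.mp hφx)
          obtain ⟨hy1, u2, hu2U, hu2adj⟩ := (mem_NUf G).mp (Finset.mem_coe.mp hφy)
          obtain ⟨q0, hq0⟩ := hUconn u1 hu1U u2 hu2U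
          set q := q0.bypass with hqdef
          have hqpath : q.IsPath := q0.bypass_isPath
          have hqsup : ∀ z ∈ q.support, z ∈ U := fun z hz =>
            hq0 z (q0.support_bypass_subset hz)
          have hne : x ≠ y := X.ne_of_adj hxy
          have hφne : φ x ≠ φ y := fun h => hne (wit.inj h)
          set newW : G.Walk (φ x) (φ y) :=
            SimpleGraph.Walk.cons hu1adj.symm (q.concat hu2adj) with hnewWdef
          have hnewsup : newW.support = φ x :: (q.support ++ [φ y]) := by
            rw [hnewWdef, SimpleGraph.Walk.support_cons, SimpleGraph.Walk.support_concat]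
          have hφxq : φ x ∉ q.support := fun h => hSU _ hφx (hqsup _ h)
          have hφyq : φ y ∉ q.support := fun h => hSU _ hφy (hqsup _ h)
          have hnewpath : newW.IsPath := by
            rw [SimpleGraph.Walk.isPath_def, hnewsup, List.nodup_cons]
            constructor
            · rw [List.mem_append, List.mem_singleton]
              push_neg
              exact ⟨hφxq, hφne⟩
            · rw [List.nodup_append]
              refine ⟨(SimpleGraph.Walk.isPath_def _).mp hqpath, List.nodup_singleton _, ?_⟩
              intro z hz z' hz' hzz
              rw [List.mem_singleton] at hz'
              subst hzz
              subst hz'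
              exact hφyq hz
          have hmemnew : ∀ z ∈ newW.support, z = φ x ∨ z = φ y ∨ z ∈ U := by
            intro z hz
            rw [hnewsup, List.mem_cons, List.mem_append, List.mem_singleton] at hz
            rcases hz with rfl | hz | rfl
            · exact Or.inl rfl
            · exact Or.inr (Or.inr (hqsup _ hz))
            · exact Or.inr (Or.inl rfl)
          have hold : ∀ (u v : Fin r), X.Adj u v → s(u, v) ≠ s(x, y) → X'.Adj u v := by
            intro u v huv hs
            rw [hX'def, SimpleGraph.deleteEdges_adj]
            exact ⟨huv, by simpa using hs⟩
          have hclass : ∀ u v : Fin r, ¬(u = x ∧ v = y) → ¬(u = y ∧ v = x) →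
              s(u, v) ≠ s(x, y) := by
            intro u v h1 h2 h
            rw [Sym2.eq_iff] at h
            tauto
          have hsupP : ∀ u v (h : X'.Adj u v), ∀ z ∈ (wit.P u v h).support, z ∈ Sset :=
            wit.supS
          refine ⟨⟨φ, fun u v h =>
            if h1 : u = x ∧ v = y then
              newW.copy (congrArg φ h1.1.symm) (congrArg φ h1.2.symm)
            else if h2 : u = y ∧ v = x then
              newW.reverse.copy (congrArg φ h2.1.symm) (congrArg φ h2.2.symm)
            else wit.P u v (hold u v h (hclass u v h1 h2)),
            wit.inj, fun _ => trivial, ?_, ?_, fun u v h z hz => trivial, ?_, ?_⟩⟩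
          · -- isPath
            intro u v h
            split_ifs with h1 h2
            · rw [SimpleGraph.Walk.isPath_copy]
              exact hnewpath
            · rw [SimpleGraph.Walk.isPath_copy]
              exact hnewpath.reverse
            · exact wit.isPath _ _ _
          · -- psymm
            intro u v h
            by_cases h1 : u = x ∧ v = y
            · obtain ⟨h1a, h1b⟩ := h1
              rw [dif_neg (fun hc : v = x ∧ u = y => hne (h1a.symm.trans hc.2)),
                dif_pos (And.intro h1b h1a),
                dif_pos (And.intro h1a h1b),
                SimpleGraph.Walk.reverse_copy]
            · by_cases h2 : u = y ∧ v = x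
              · obtain ⟨h2a, h2b⟩ := h2
                rw [dif_pos (And.intro h2b h2a),
                  dif_neg (fun hc : u = x ∧ v = y => hne (hc.1.symm.trans h2a)),
                  dif_pos (And.intro h2a h2b),
                  SimpleGraph.Walk.reverse_copy, SimpleGraph.Walk.reverse_reverse]
              · rw [dif_neg (fun hc : v = x ∧ u = y => h2 ⟨hc.2, hc.1⟩),
                  dif_neg (fun hc : v = y ∧ u = x => h1 ⟨hc.2, hc.1⟩),
                  dif_neg h1, dif_neg h2]
                exact wit.psymm u v _
          · -- cond4
            intro u v h w hw
            by_cases h1 : u = x ∧ v = y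
            · obtain ⟨h1a, h1b⟩ := h1
              rw [dif_pos (And.intro h1a h1b),
                SimpleGraph.Walk.support_copy] at hw
              rcases hmemnew _ hw with h3 | h3 | h3
              · exact Or.inl ((wit.inj h3).trans h1a.symm)
              · exact Or.inr ((wit.inj h3).trans h1b.symm)
              · exact absurd h3 (hSU _ (wit.ranS w))
            · by_cases h2 : u = y ∧ v = x
              · obtain ⟨h2a, h2b⟩ := h2
                rw [dif_neg (fun hc : u = x ∧ v = y => hne (hc.1.symm.trans h2a)),
                  dif_pos (And.intro h2a h2b),
                  SimpleGraph.Walk.support_copy, SimpleGraph.Walk.support_reverse,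
                  List.mem_reverse] at hw
                rcases hmemnew _ hw with h3 | h3 | h3
                · exact Or.inr ((wit.inj h3).trans h2b.symm)
                · exact Or.inl ((wit.inj h3).trans h2a.symm)
                · exact absurd h3 (hSU _ (wit.ranS w))
              · rw [dif_neg h1, dif_neg h2] at hw
                exact wit.cond4 _ _ _ _ hw
          · -- cond6
            intro u v h u' v' h' hs z hz hz'
            by_cases h1 : (u = x ∧ v = y) ∨ (u = y ∧ v = x)
            · have hzn : z = φ x ∨ z = φ y ∨ z ∈ U := by
                rcases h1 with ⟨h1a, h1b⟩ | ⟨h1a, h1b⟩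
                · rw [dif_pos (And.intro h1a h1b),
                    SimpleGraph.Walk.support_copy] at hz
                  exact hmemnew _ hz
                · rw [dif_neg (fun hc : u = x ∧ v = y => hne (hc.1.symm.trans h1a)),
                    dif_pos (And.intro h1a h1b),
                    SimpleGraph.Walk.support_copy, SimpleGraph.Walk.support_reverse,
                    List.mem_reverse] at hz
                  exact hmemnew _ hz
              by_cases h2 : (u' = x ∧ v' = y) ∨ (u' = y ∧ v' = x)
              · exfalso
                have hsa : s(u, v) = s(x, y) := by
                  rcases h1 with ⟨h1a, h1b⟩ | ⟨h1a, h1b⟩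
                  · exact Sym2.eq_iff.mpr (Or.inl ⟨h1a, h1b⟩)
                  · exact Sym2.eq_iff.mpr (Or.inr ⟨h1a, h1b⟩)
                have hsb : s(u', v') = s(x, y) := by
                  rcases h2 with ⟨h2a, h2b⟩ | ⟨h2a, h2b⟩
                  · exact Sym2.eq_iff.mpr (Or.inl ⟨h2a, h2b⟩)
                  · exact Sym2.eq_iff.mpr (Or.inr ⟨h2a, h2b⟩)
                exact hs (hsa.trans hsb.symm)
              · obtain ⟨h2a, h2b⟩ := not_or.mp h2
                rw [dif_neg h2a, dif_neg h2b] at hz'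
                have hzS : z ∈ Sset := hsupP _ _ _ _ hz'
                rcases hzn with rfl | rfl | hzU
                · exact ⟨x, rfl⟩
                · exact ⟨y, rfl⟩
                · exact absurd hzU (hSU _ hzS)
            · obtain ⟨h1a, h1b⟩ := not_or.mp h1
              rw [dif_neg h1a, dif_neg h1b] at hz
              have hzS : z ∈ Sset := hsupP _ _ _ _ hz
              by_cases h2 : (u' = x ∧ v' = y) ∨ (u' = y ∧ v' = x)
              · have hzn : z = φ x ∨ z = φ y ∨ z ∈ U := by
                  rcases h2 with ⟨h2a, h2b⟩ | ⟨h2a, h2b⟩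
                  · rw [dif_pos (And.intro h2a h2b),
                      SimpleGraph.Walk.support_copy] at hz'
                    exact hmemnew _ hz'
                  · rw [dif_neg (fun hc : u' = x ∧ v' = y => hne (hc.1.symm.trans h2a)),
                      dif_pos (And.intro h2a h2b),
                      SimpleGraph.Walk.support_copy, SimpleGraph.Walk.support_reverse,
                      List.mem_reverse] at hz'
                    exact hmemnew _ hz'
                rcases hzn with rfl | rfl | hzU
                · exact ⟨x, rfl⟩
                · exact ⟨y, rfl⟩
                · exact absurd hzU (hSU _ hzS)
              · obtain ⟨h2a, h2b⟩ := not_or.mp h2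
                rw [dif_neg h2a, dif_neg h2b] at hz'
                exact wit.cond6 _ _ _ _ _ _ hs _ hz hz'
      · -- disconnected: pass to a reachability component
        rw [SimpleGraph.Preconnected] at hconn
        push_neg at hconn
        obtain ⟨v, w, hvw⟩ := hconn
        set S : Set V := {u | G.Reachable v u} with hS
        haveI : Nonempty ↥S := ⟨⟨v, SimpleGraph.Reachable.refl v⟩⟩
        have hwS : w ∉ S := hvw
        have hcardS : Fintype.card ↥S ≤ n := by
          have hlt : Fintype.card ↥S < Fintype.card V := by
            rw [← Nat.card_eq_fintype_card, Nat.card_coe_set_eq]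
            have hss : S ⊂ Set.univ := Set.ssubset_univ_iff.mpr
              (fun h => hwS (h ▸ Set.mem_univ w))
            calc S.ncard < (Set.univ : Set V).ncard :=
                  Set.ncard_lt_ncard hss (Set.toFinite _)
              _ = Fintype.card V := by rw [Set.ncard_univ, Nat.card_eq_fintype_card]
          omega
        have hdegS : ∀ v' : ↥S, (r + 2) * 2 ^ (m + 1) ≤
            ((G.induce S).neighborSet v').ncard := by
          intro v'
          rw [ncard_induce_nbr]
          have heq : {w : V | w ∈ S ∧ G.Adj ↑v' w} = G.neighborSet ↑v' := by
            ext z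
            simp only [Set.mem_setOf_eq, SimpleGraph.mem_neighborSet]
            refine ⟨fun h => h.2, fun h => ⟨?_, h⟩⟩
            exact v'.2.trans h.reachable
          rw [heq]
          exact hdeg _
        obtain ⟨wit⟩ := ihn ↥S (G.induce S) hcardS hdegS X hX
        exact ⟨(wit.lift).mono (Set.subset_univ _)⟩

end Main

/-- (Mader's theorem) For every `r` there exists a constant `d` such that every finite
nonempty graph with minimum degree at least `d` contains `K_r` as a topological minor. -/
theorem stmt15 (r : ℕ) :
    ∃ d : ℕ, ∀ (V : Type) [Fintype V] [Nonempty V] (G : SimpleGraph V),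
      (∀ v : V, d ≤ (G.neighborSet v).ncard) →
      TopMinor (⊤ : SimpleGraph (Fin r)) G := by
  refine ⟨(r + 2) * 2 ^ (Fintype.card (Sym2 (Fin r))), ?_⟩
  intro V _ _ G hdeg
  have hedge : (⊤ : SimpleGraph (Fin r)).edgeSet.ncard ≤ Fintype.card (Sym2 (Fin r)) := by
    calc (⊤ : SimpleGraph (Fin r)).edgeSet.ncard
        ≤ (Set.univ : Set (Sym2 (Fin r))).ncard :=
          Set.ncard_le_ncard (Set.subset_univ _) (Set.toFinite _)
      _ = Fintype.card (Sym2 (Fin r)) := by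
          rw [Set.ncard_univ, Nat.card_eq_fintype_card]
  obtain ⟨w⟩ := mainL r (Fintype.card (Sym2 (Fin r))) (Fintype.card V) V G le_rfl hdeg
    (⊤ : SimpleGraph (Fin r)) hedge
  exact w.toTopMinor
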